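/- arXiv:1211.1401 — 2 statements merged into one kernel-verified Lean document; each statement's English description precedes it below -/
import Mathlib

section
/- Assume that g_n^2 ≠ b_n for every n ≥ 1. Then the series Σ_{n≥1} G_n(t) sin(γ_n ξ) sin(γ_n x) converges uniformly on [0,l] × [0,l] × [0,∞); consequently the Green function G(x,ξ,t) is a continuous function of (x,ξ,t) on [0,l] × [0,l] × [0,∞). -/
lemma aux_pow (k u : ℝ) (hk : 0 ≤ k) (hu : 0 < u) (hu1 : u ≤ 1) :
    u ^ k * (1 - u) * (k + 1) ≤ 1 := by
  have hw : 0 ≤ u⁻¹ - 1 := by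
    have : 1 ≤ u⁻¹ := (one_le_inv_iff₀).mpr ⟨hu, hu1⟩
    linarith
  have hb := one_add_mul_self_le_rpow_one_add (s := u⁻¹ - 1) (by linarith)
    (p := k + 1) (by linarith)
  have hQ : (1 + (u⁻¹ - 1)) = u⁻¹ := by ring
  rw [hQ] at hb
  have hA : (0:ℝ) < u ^ k := Real.rpow_pos_of_pos hu k
  have h2 : u ^ (k + 1) = u ^ k * u := Real.rpow_add_one hu.ne' k
  have h1 : u⁻¹ ^ (k + 1) * u ^ (k + 1) = 1 := by
    rw [← Real.mul_rpow (inv_nonneg.2 hu.le) hu.le, inv_mul_cancel₀ hu.ne', Real.one_rpow]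
  have hmul := mul_le_mul_of_nonneg_right hb (le_of_lt (by positivity : (0:ℝ) < u ^ (k+1)))
  rw [h1] at hmul
  have hiu : u⁻¹ * u = 1 := inv_mul_cancel₀ hu.ne'
  have hexp : (1 + (k + 1) * (u⁻¹ - 1)) * u ^ (k + 1)
      = u ^ (k + 1) + u ^ k * (1 - u) * (k + 1) := by
    rw [h2]
    linear_combination ((k + 1) * u ^ k) * hiu
  rw [hexp] at hmul
  have : (0:ℝ) ≤ u ^ (k + 1) := by positivity
  linarith

lemma hyp_bound (g ω t : ℝ) (hω : 0 < ω) (hg : ω < g) (ht : 0 ≤ t) :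
    Real.exp (-g * t) * Real.sinh (ω * t) / ω ≤ 1 / g := by
  have hgpos : 0 < g := hω.trans hg
  have hω' : ω ≠ 0 := hω.ne'
  set u := Real.exp (-(2 * ω * t)) with hudef
  have hu : 0 < u := Real.exp_pos _
  have hu1 : u ≤ 1 := Real.exp_le_one_iff.2 (by nlinarith)
  set k := (g - ω) / (2 * ω) with hkdef
  have hk : 0 ≤ k := div_nonneg (by linarith) (by linarith)
  have e1 : u ^ k = Real.exp (-((g - ω) * t)) := by
    rw [Real.rpow_def_of_pos hu, hudef, Real.log_exp]
    congr 1; rw [hkdef]; field_simp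
  have e2 : u ^ (k + 1) = Real.exp (-((g + ω) * t)) := by
    rw [Real.rpow_def_of_pos hu, hudef, Real.log_exp]
    congr 1; rw [hkdef]; field_simp; ring
  have hk1 : k + 1 = (g + ω) / (2 * ω) := by rw [hkdef]; field_simp; ring
  have hsinh : Real.exp (-g * t) * Real.sinh (ω * t) = (u ^ k - u ^ (k + 1)) / 2 := by
    rw [Real.sinh_eq, e1, e2, ← mul_div_assoc, mul_sub, ← Real.exp_add, ← Real.exp_add]
    ring_nf
  have hkey := aux_pow k u hk hu hu1
  rw [hk1] at hkey
  have h2ω : (0:ℝ) < 2 * ω := by linarith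
  rw [← mul_div_assoc, div_le_one h2ω] at hkey
  have hA : (0:ℝ) < u ^ k := Real.rpow_pos_of_pos hu k
  have h2 : u ^ (k + 1) = u ^ k * u := Real.rpow_add_one hu.ne' k
  rw [hsinh, h2, div_div, div_le_div_iff₀ (by linarith) hgpos]
  nlinarith [mul_nonneg hA.le (sub_nonneg.2 hu1)]

lemma osc_bound (g ν t : ℝ) (hν : 0 < ν) (hg : 0 < g) (ht : 0 ≤ t) :
    |Real.exp (-g * t) * Real.sin (ν * t) / ν| ≤ 1 / g := by
  have hE : 0 < Real.exp (-g * t) := Real.exp_pos _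
  have h1 : |Real.exp (-g * t) * Real.sin (ν * t) / ν| ≤ t * Real.exp (-g * t) := by
    rw [abs_div, abs_mul, abs_of_pos hE, abs_of_pos hν]
    have hs : |Real.sin (ν * t)| ≤ ν * t := by
      calc |Real.sin (ν * t)| ≤ |ν * t| := Real.abs_sin_le_abs
        _ = ν * t := abs_of_nonneg (by positivity)
    rw [div_le_iff₀ hν]
    calc Real.exp (-g * t) * |Real.sin (ν * t)| ≤ Real.exp (-g * t) * (ν * t) :=
          mul_le_mul_of_nonneg_left hs hE.le
      _ = t * Real.exp (-g * t) * ν := by ring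
  refine h1.trans ?_
  have h2 : g * t ≤ Real.exp (g * t) := by
    have := Real.add_one_le_exp (g * t); linarith
  have hE2 : 0 < Real.exp (g * t) := Real.exp_pos _
  rw [le_div_iff₀ hg]
  have h3 : Real.exp (g * t) * Real.exp (-g * t) = 1 := by
    rw [← Real.exp_add]; ring_nf; exact Real.exp_zero
  nlinarith [mul_le_mul_of_nonneg_right h2 hE.le]

/-- γ_n = nπ/l -/
noncomputable def gamman (l : ℝ) (n : ℕ) : ℝ := n * Real.pi / l

/-- b_n = γ_n² + λ²/4 -/
noncomputable def bn (lm l : ℝ) (n : ℕ) : ℝ := (gamman l n) ^ 2 + lm ^ 2 / 4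

/-- g_n = (α + ε b_n)/2 -/
noncomputable def gn (α ε lm l : ℝ) (n : ℕ) : ℝ := (α + ε * bn lm l n) / 2

/-- G_n(t), defined by cases according to the sign of g_n² − b_n. -/
noncomputable def Gn (α ε lm l : ℝ) (n : ℕ) (t : ℝ) : ℝ :=
  if (gn α ε lm l n) ^ 2 > bn lm l n then
    Real.exp (-(gn α ε lm l n) * t) *
      Real.sinh (Real.sqrt ((gn α ε lm l n) ^ 2 - bn lm l n) * t) /
      Real.sqrt ((gn α ε lm l n) ^ 2 - bn lm l n)
  else if (gn α ε lm l n) ^ 2 = bn lm l n then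
    t * Real.exp (-(gn α ε lm l n) * t)
  else
    Real.exp (-(gn α ε lm l n) * t) *
      Real.sin (Real.sqrt (bn lm l n - (gn α ε lm l n) ^ 2) * t) /
      Real.sqrt (bn lm l n - (gn α ε lm l n) ^ 2)

/-- The Green function G(x,ξ,t) = (2/l) e^{λx/2} Σ_{n≥1} G_n(t) sin(γ_n ξ) sin(γ_n x). -/
noncomputable def GreenG (α ε lm l : ℝ) (x ξ t : ℝ) : ℝ :=
  (2 / l) * Real.exp (lm * x / 2) *
    ∑' n : ℕ, Gn α ε lm l (n + 1) t * Real.sin (gamman l (n + 1) * ξ) *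
      Real.sin (gamman l (n + 1) * x)

/-- a_λ = α + ελ²/4 -/
noncomputable def alam (α ε lm : ℝ) : ℝ := α + ε * lm ^ 2 / 4

/-- p_λ = π²/(επ² + a_λ l²) -/
noncomputable def plam (α ε lm l : ℝ) : ℝ :=
  Real.pi ^ 2 / (ε * Real.pi ^ 2 + alam α ε lm * l ^ 2)

/-- q_λ = (a_λ + ε(π/l)²)/2 -/
noncomputable def qlam (α ε lm l : ℝ) : ℝ :=
  (alam α ε lm + ε * (Real.pi / l) ^ 2) / 2

/-- δ = min(p_λ, q_λ) -/
noncomputable def dlt (α ε lm l : ℝ) : ℝ := min (plam α ε lm l) (qlam α ε lm l)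

lemma bn_pos {lm l : ℝ} (hlm : 0 < lm) (hl : 0 < l) (n : ℕ) : 0 < bn lm l n := by
  unfold bn gamman
  positivity

lemma gn_pos {α ε lm l : ℝ} (hα : 0 < α) (hε : 0 < ε) (hlm : 0 < lm) (hl : 0 < l) (n : ℕ) :
    0 < gn α ε lm l n := by
  have hb := bn_pos hlm hl n
  unfold gn
  nlinarith

lemma Gn_bound (α ε lm l : ℝ) (hα : 0 < α) (hε : 0 < ε) (hlm : 0 < lm) (hl : 0 < l)
    (hnd : ∀ n : ℕ, 1 ≤ n → (gn α ε lm l n) ^ 2 ≠ bn lm l n)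
    (n : ℕ) (hn : 1 ≤ n) (t : ℝ) (ht : 0 ≤ t) :
    |Gn α ε lm l n t| ≤ 1 / gn α ε lm l n := by
  have hb := bn_pos hlm hl n
  have hg := gn_pos hα hε hlm hl n
  unfold Gn
  split_ifs with h1 h2
  · set ω := Real.sqrt ((gn α ε lm l n) ^ 2 - bn lm l n) with hωdef
    have hω2 : ω ^ 2 = (gn α ε lm l n) ^ 2 - bn lm l n := by
      rw [hωdef, Real.sq_sqrt (by linarith)]
    have hωpos : 0 < ω := Real.sqrt_pos.2 (by linarith)
    have hωlt : ω < gn α ε lm l n := by nlinarith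
    rw [abs_of_nonneg (div_nonneg (mul_nonneg (Real.exp_pos _).le
      (Real.sinh_nonneg_iff.2 (by positivity))) hωpos.le)]
    exact hyp_bound _ _ _ hωpos hωlt ht
  · exact absurd h2 (hnd n hn)
  · have hlt : (gn α ε lm l n) ^ 2 < bn lm l n := lt_of_le_of_ne (not_lt.1 h1) (hnd n hn)
    have hνpos : 0 < Real.sqrt (bn lm l n - (gn α ε lm l n) ^ 2) :=
      Real.sqrt_pos.2 (by linarith)
    exact osc_bound _ _ _ hνpos hg ht

/-- Assuming g_n² ≠ b_n for every n ≥ 1, the series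
Σ_{n≥1} G_n(t) sin(γ_n ξ) sin(γ_n x) converges uniformly on [0,l] × [0,l] × [0,∞);
consequently G(x,ξ,t) is continuous on [0,l] × [0,l] × [0,∞). -/
theorem stmt2 (α ε lm l : ℝ) (hα : 0 < α) (hε : 0 < ε) (hlm : 0 < lm) (hl : 0 < l)
    (hnd : ∀ n : ℕ, 1 ≤ n → (gn α ε lm l n) ^ 2 ≠ bn lm l n) :
    TendstoUniformlyOn
      (fun (N : ℕ) (p : ℝ × ℝ × ℝ) => ∑ n ∈ Finset.range N,
        Gn α ε lm l (n + 1) p.2.2 * Real.sin (gamman l (n + 1) * p.2.1) *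
          Real.sin (gamman l (n + 1) * p.1))
      (fun p : ℝ × ℝ × ℝ => ∑' n : ℕ,
        Gn α ε lm l (n + 1) p.2.2 * Real.sin (gamman l (n + 1) * p.2.1) *
          Real.sin (gamman l (n + 1) * p.1))
      Filter.atTop (Set.Icc 0 l ×ˢ Set.Icc 0 l ×ˢ Set.Ici 0) ∧
    ContinuousOn (fun p : ℝ × ℝ × ℝ => GreenG α ε lm l p.1 p.2.1 p.2.2)
      (Set.Icc 0 l ×ˢ Set.Icc 0 l ×ˢ Set.Ici 0) := by
  have hπ := Real.pi_pos
  set u : ℕ → ℝ := fun n => 1 / gn α ε lm l (n + 1) with hudef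
  -- summability of the majorant
  have hsummand : ∀ n : ℕ, u n ≤ (2 * l ^ 2 / (ε * Real.pi ^ 2)) * (1 / ((n : ℝ) + 1) ^ 2) := by
    intro n
    have hA : (0:ℝ) < ε * (((n:ℝ) + 1) * Real.pi / l) ^ 2 / 2 := by positivity
    have h1 : ε * (((n:ℝ) + 1) * Real.pi / l) ^ 2 / 2 ≤ gn α ε lm l (n + 1) := by
      unfold gn bn gamman
      push_cast
      nlinarith [mul_pos hε (by positivity : (0:ℝ) < lm ^ 2 / 4)]
    have h2 : u n ≤ 1 / (ε * (((n:ℝ) + 1) * Real.pi / l) ^ 2 / 2) :=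
      one_div_le_one_div_of_le hA h1
    refine h2.trans (le_of_eq ?_)
    field_simp
  have hsum2 : Summable (fun n : ℕ => (1:ℝ) / ((n : ℝ) + 1) ^ 2) := by
    have h0 : Summable (fun n : ℕ => (1:ℝ) / (n : ℝ) ^ 2) :=
      Real.summable_one_div_nat_pow.mpr (by norm_num)
    have h := (summable_nat_add_iff 1).mpr h0
    exact h.congr fun n => by push_cast; ring
  have hu : Summable u := by
    refine Summable.of_nonneg_of_le (fun n => ?_) hsummand (hsum2.mul_left _)
    exact le_of_lt (one_div_pos.2 (gn_pos hα hε hlm hl (n + 1)))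
  -- the M-test bound
  have hfu : ∀ (n : ℕ) (p : ℝ × ℝ × ℝ),
      p ∈ (Set.Icc 0 l ×ˢ Set.Icc 0 l ×ˢ Set.Ici (0:ℝ)) →
      ‖Gn α ε lm l (n + 1) p.2.2 * Real.sin (gamman l (n + 1) * p.2.1) *
        Real.sin (gamman l (n + 1) * p.1)‖ ≤ u n := by
    intro n p hp
    have ht : (0:ℝ) ≤ p.2.2 := hp.2.2
    have hG : |Gn α ε lm l (n + 1) p.2.2| ≤ u n :=
      Gn_bound α ε lm l hα hε hlm hl hnd (n + 1) (Nat.le_add_left 1 n) p.2.2 ht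
    rw [Real.norm_eq_abs, abs_mul, abs_mul]
    calc |Gn α ε lm l (n + 1) p.2.2| * |Real.sin (gamman l (n + 1) * p.2.1)| *
          |Real.sin (gamman l (n + 1) * p.1)|
        ≤ |Gn α ε lm l (n + 1) p.2.2| := by
          have a0 := abs_nonneg (Gn α ε lm l (n + 1) p.2.2)
          have s1 := Real.abs_sin_le_one (gamman l (n + 1) * p.2.1)
          have s2 := Real.abs_sin_le_one (gamman l (n + 1) * p.1)
          have s1' := abs_nonneg (Real.sin (gamman l (n + 1) * p.2.1))
          exact le_trans (mul_le_of_le_one_right (mul_nonneg a0 s1') s2)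
            (mul_le_of_le_one_right a0 s1)
      _ ≤ u n := hG
  have hTU := tendstoUniformlyOn_tsum_nat hu hfu
  -- continuity of each term
  have hGcont : ∀ m : ℕ, Continuous (Gn α ε lm l m) := by
    intro m
    unfold Gn
    split_ifs with h1 h2
    · exact Continuous.div_const (by fun_prop) _
    · fun_prop
    · exact Continuous.div_const (by fun_prop) _
  have htermcont : ∀ n : ℕ, Continuous (fun p : ℝ × ℝ × ℝ =>
      Gn α ε lm l (n + 1) p.2.2 * Real.sin (gamman l (n + 1) * p.2.1) *
        Real.sin (gamman l (n + 1) * p.1)) := by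
    intro n
    refine Continuous.mul (Continuous.mul ?_ ?_) ?_
    · exact (hGcont (n + 1)).comp (continuous_snd.comp continuous_snd)
    · exact Real.continuous_sin.comp (continuous_const.mul (continuous_fst.comp continuous_snd))
    · exact Real.continuous_sin.comp (continuous_const.mul continuous_fst)
  have hcont : ∀ N : ℕ, ContinuousOn (fun p : ℝ × ℝ × ℝ => ∑ n ∈ Finset.range N,
      Gn α ε lm l (n + 1) p.2.2 * Real.sin (gamman l (n + 1) * p.2.1) *
        Real.sin (gamman l (n + 1) * p.1))
      (Set.Icc 0 l ×ˢ Set.Icc 0 l ×ˢ Set.Ici 0) := by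
    intro N
    exact (continuous_finset_sum _ fun n _ => htermcont n).continuousOn
  have hS := hTU.continuousOn (Filter.Eventually.of_forall hcont).frequently
  refine ⟨hTU, ?_⟩
  have heq : (fun p : ℝ × ℝ × ℝ => GreenG α ε lm l p.1 p.2.1 p.2.2)
      = fun p : ℝ × ℝ × ℝ => (2 / l) * Real.exp (lm * p.1 / 2) *
        ∑' n : ℕ, Gn α ε lm l (n + 1) p.2.2 * Real.sin (gamman l (n + 1) * p.2.1) *
          Real.sin (gamman l (n + 1) * p.1) := rfl
  rw [heq]
  exact ((continuous_const.mul (Real.continuous_exp.comp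
    (by fun_prop))).continuousOn).mul hS
end

section
/- Let I ⊆ ℝ be an open interval, y : I → ℝ differentiable, and define U(ξ) = 4 arctan(y(ξ) + √(y(ξ)² + 1)). Then U satisfies U'(ξ) = sin U(ξ) − γ on I if and only if y satisfies the Riccati equation y'(ξ) = −(y(ξ) + (γ/2)(1 + y(ξ)²)) on I. -/
open Real

private lemma sin_four_arctan (w : ℝ) :
    Real.sin (4 * Real.arctan w) = 4 * w * (1 - w ^ 2) / (1 + w ^ 2) ^ 2 := by
  have h4 : (4 : ℝ) * Real.arctan w = 2 * (2 * Real.arctan w) := by ring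
  have hs : Real.sqrt (1 + w ^ 2) > 0 := Real.sqrt_pos.2 (by positivity)
  have hsq : Real.sqrt (1 + w ^ 2) ^ 2 = 1 + w ^ 2 :=
    Real.sq_sqrt (by positivity)
  rw [h4, Real.sin_two_mul, Real.cos_two_mul, Real.sin_two_mul,
    Real.sin_arctan, Real.cos_arctan]
  have h1 : (1 : ℝ) + w ^ 2 ≠ 0 := by positivity
  field_simp
  linear_combination (-(4 * w * (1 - w ^ 2)) * Real.sqrt (1 + w ^ 2) ^ 2 - 8 * w * (1 + w ^ 2)) * hsq

/-- Let I = (a,b) be an open interval, y : I → ℝ differentiable and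
U(ξ) = 4 arctan(y(ξ) + √(y(ξ)² + 1)). Then U' = sin U − γ on I iff y satisfies the
Riccati equation y' = −(y + (γ/2)(1 + y²)) on I. -/
theorem stmt11 (γ a b : ℝ) (y : ℝ → ℝ)
    (hy : ∀ ξ ∈ Set.Ioo a b, DifferentiableAt ℝ y ξ)
    (U : ℝ → ℝ)
    (hU : ∀ ξ : ℝ, U ξ = 4 * Real.arctan (y ξ + Real.sqrt ((y ξ) ^ 2 + 1))) :
    (∀ ξ ∈ Set.Ioo a b, deriv U ξ = Real.sin (U ξ) - γ) ↔
    (∀ ξ ∈ Set.Ioo a b, deriv y ξ = -(y ξ + γ / 2 * (1 + (y ξ) ^ 2))) := by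
  have key : ∀ ξ ∈ Set.Ioo a b,
      (deriv U ξ = Real.sin (U ξ) - γ ↔
        deriv y ξ = -(y ξ + γ / 2 * (1 + (y ξ) ^ 2))) := by
    intro ξ hξ
    set Y := y ξ with hY
    set y' := deriv y ξ with hy'
    have hd : HasDerivAt y y' ξ := (hy ξ hξ).hasDerivAt
    set s := Real.sqrt (Y ^ 2 + 1) with hsdef
    have hspos : 0 < s := Real.sqrt_pos.2 (by positivity)
    have hssq : s ^ 2 = Y ^ 2 + 1 := Real.sq_sqrt (by positivity)
    have hwpos : 0 < Y + s := by nlinarith [abs_nonneg Y, sq_abs Y, neg_abs_le Y]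
    -- derivative of U
    have hf : HasDerivAt (fun t => (y t) ^ 2 + 1) (2 * Y * y') ξ := by
      simpa using ((hd.pow 2).add_const 1)
    have hsq : HasDerivAt (fun t => Real.sqrt ((y t) ^ 2 + 1))
        (2 * Y * y' / (2 * s)) ξ := hf.sqrt (by positivity)
    have hin : HasDerivAt (fun t => y t + Real.sqrt ((y t) ^ 2 + 1))
        (y' + 2 * Y * y' / (2 * s)) ξ := hd.add hsq
    have harc : HasDerivAt (fun t => Real.arctan (y t + Real.sqrt ((y t) ^ 2 + 1)))
        (1 / (1 + (Y + s) ^ 2) * (y' + 2 * Y * y' / (2 * s))) ξ := hin.arctan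
    have hUd : HasDerivAt U
        (4 * (1 / (1 + (Y + s) ^ 2) * (y' + 2 * Y * y' / (2 * s)))) ξ := by
      have := harc.const_mul 4
      refine this.congr_of_eventuallyEq ?_
      filter_upwards with t
      rw [hU t]
    have hderivU : deriv U ξ =
        4 * (1 / (1 + (Y + s) ^ 2) * (y' + 2 * Y * y' / (2 * s))) := hUd.deriv
    -- key algebraic identities
    have h1w : 1 + (Y + s) ^ 2 = 2 * s * (Y + s) := by nlinarith [hssq]
    have hderivU' : deriv U ξ = 2 * y' / (Y ^ 2 + 1) := by
      rw [hderivU, h1w]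
      field_simp
      linear_combination (-(4 * y' * (Y + s))) * hssq
    -- sin (U ξ)
    have hsin : Real.sin (U ξ) = -2 * Y / (Y ^ 2 + 1) := by
      rw [hU ξ, sin_four_arctan, h1w]
      have h2 : 1 - (Y + s) ^ 2 = -(2 * Y * (Y + s)) := by nlinarith [hssq]
      rw [h2]
      field_simp
      linear_combination (4 * Y * (Y + s)) * hssq
    rw [hderivU', hsin]
    have hpos : (0:ℝ) < Y ^ 2 + 1 := by positivity
    have hne : (Y ^ 2 + 1) ≠ 0 := ne_of_gt hpos
    rw [div_sub' hne, div_eq_div_iff hne hne]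
    constructor
    · intro h
      have h2 : 2 * y' = -2 * Y - γ * (Y ^ 2 + 1) := by
        nlinarith [h, hpos]
      linarith
    · intro h
      rw [h]
      ring
  constructor
  · intro H ξ hξ; exact (key ξ hξ).1 (H ξ hξ)
  · intro H ξ hξ; exact (key ξ hξ).2 (H ξ hξ)
end
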